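/- Let H be the Higman group ⟨a, b, c, d | b·a·b⁻¹ = a², c·b·c⁻¹ = b², d·c·d⁻¹ = c², a·d·a⁻¹ = d²⟩ and let B be the group ⟨x, y, z | x² = y³ = z⁷ = x·y·z⟩. For k, l ≥ 0, the group H^k × B^l × ℤ has weight 1; more precisely, the normal closure in H^k × B^l × ℤ of the single element whose H-coordinates all equal the image of the generator a, whose B-coordinates all equal the image of the generator x, and whose ℤ-coordinate is 1, is the whole group. -/

import Mathlib

/-- The relators of the Higman group `⟨a,b,c,d | bab⁻¹=a², cbc⁻¹=b², dcd⁻¹=c², ada⁻¹=d²⟩`,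
with the four generators `a, b, c, d` encoded as `0, 1, 2, 3 : Fin 4`. -/
def higmanRels : Set (FreeGroup (Fin 4)) :=
  {FreeGroup.of 1 * FreeGroup.of 0 * (FreeGroup.of 1)⁻¹ * (FreeGroup.of 0 ^ 2)⁻¹,
   FreeGroup.of 2 * FreeGroup.of 1 * (FreeGroup.of 2)⁻¹ * (FreeGroup.of 1 ^ 2)⁻¹,
   FreeGroup.of 3 * FreeGroup.of 2 * (FreeGroup.of 3)⁻¹ * (FreeGroup.of 2 ^ 2)⁻¹,
   FreeGroup.of 0 * FreeGroup.of 3 * (FreeGroup.of 0)⁻¹ * (FreeGroup.of 3 ^ 2)⁻¹}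

/-- The relators of the group `B = ⟨x, y, z | x² = y³ = z⁷ = xyz⟩`, with the three generators
`x, y, z` encoded as `0, 1, 2 : Fin 3`. -/
def brieskornRels : Set (FreeGroup (Fin 3)) :=
  {FreeGroup.of 0 ^ 2 * (FreeGroup.of 1 ^ 3)⁻¹,
   FreeGroup.of 1 ^ 3 * (FreeGroup.of 2 ^ 7)⁻¹,
   FreeGroup.of 2 ^ 7 * (FreeGroup.of 0 * FreeGroup.of 1 * FreeGroup.of 2)⁻¹}

open Subgroup
open scoped commutatorElement

lemma sq_eq_self {G : Type*} [Group G] {d : G} (h : d = d ^ 2) : d = 1 :=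
  (mul_left_cancel (show d * 1 = d * d by rw [mul_one, ← pow_two, ← h])).symm

lemma mk_rel_one {α : Type*} {rels : Set (FreeGroup α)} {r : FreeGroup α} (h : r ∈ rels) :
    PresentedGroup.mk rels r = 1 :=
  (QuotientGroup.eq_one_iff r).mpr (Subgroup.subset_normalClosure h)

/-- If `G` is perfect and the normal closure of `a` is everything, then the normal closure of
the commutators `⁅h, a⁆` is everything. -/
lemma comm_closure_top {G : Type*} [Group G] {a : G}
    (hperf : commutator G = ⊤)
    (hcl : Subgroup.normalClosure {a} = ⊤) :
    Subgroup.normalClosure {w : G | ∃ h : G, ⁅h, a⁆ = w} = ⊤ := by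
  set M := Subgroup.normalClosure {w : G | ∃ h : G, ⁅h, a⁆ = w} with hM
  haveI : M.Normal := Subgroup.normalClosure_normal
  set π := QuotientGroup.mk' M with hπ
  have hcent : (π a) ∈ Subgroup.center (G ⧸ M) := by
    rw [Subgroup.mem_center_iff]
    intro q
    obtain ⟨h, rfl⟩ := QuotientGroup.mk'_surjective M q
    have h1 : π ⁅h, a⁆ = 1 :=
      (QuotientGroup.eq_one_iff _).mpr (Subgroup.subset_normalClosure ⟨h, rfl⟩)
    rw [map_commutatorElement, commutatorElement_eq_one_iff_mul_comm] at h1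
    exact h1
  have htop : Subgroup.normalClosure {π a} = ⊤ := by
    have := Subgroup.map_normalClosure {a} π (QuotientGroup.mk'_surjective M)
    rw [hcl, Set.image_singleton] at this
    rw [← this]
    exact (Subgroup.map_top_of_surjective π (QuotientGroup.mk'_surjective M)).symm ▸ rfl
  have hcentop : Subgroup.center (G ⧸ M) = ⊤ := by
    rw [eq_top_iff, ← htop]
    exact Subgroup.normalClosure_le_normal (by simpa using hcent)
  -- hence quotient is abelian, so commutator G ≤ M
  have : commutator G ≤ M := by
    rw [commutator_eq_closure, Subgroup.closure_le]
    rintro w ⟨p, q, rfl⟩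
    rw [SetLike.mem_coe, ← QuotientGroup.eq_one_iff]
    show (QuotientGroup.mk' M) ⁅p, q⁆ = 1
    rw [map_commutatorElement, commutatorElement_eq_one_iff_mul_comm]
    have := Subgroup.mem_center_iff.mp (hcentop ▸ Subgroup.mem_top (π q) : π q ∈ Subgroup.center _)
    exact this (π p)
  rw [eq_top_iff, ← hperf]
  exact this

lemma key_lemma {G K : Type*} [Group G] [Group K] {a : G}
    (hperf : commutator G = ⊤) (hcl : Subgroup.normalClosure {a} = ⊤)
    (φ : G →* K) (N : Subgroup K) [N.Normal]
    (hcom : ∀ h : G, φ ⁅h, a⁆ ∈ N) : ∀ h : G, φ h ∈ N := by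
  intro h
  have hle : Subgroup.normalClosure {w : G | ∃ h : G, ⁅h, a⁆ = w} ≤ N.comap φ := by
    apply Subgroup.normalClosure_le_normal
    rintro w ⟨h, rfl⟩
    exact hcom h
  rw [comm_closure_top hperf hcl] at hle
  exact hle (Subgroup.mem_top h)

lemma hrel1 : (PresentedGroup.of 1 : PresentedGroup higmanRels) * PresentedGroup.of 0 *
    (PresentedGroup.of 1)⁻¹ = (PresentedGroup.of 0) ^ 2 := by
  have h := mk_rel_one (show FreeGroup.of 1 * FreeGroup.of 0 * (FreeGroup.of 1)⁻¹ *
    (FreeGroup.of 0 ^ 2)⁻¹ ∈ higmanRels by simp [higmanRels])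
  simp only [map_mul, map_inv, map_pow] at h
  rw [mul_inv_eq_one] at h
  exact h

lemma hrel2 : (PresentedGroup.of 2 : PresentedGroup higmanRels) * PresentedGroup.of 1 *
    (PresentedGroup.of 2)⁻¹ = (PresentedGroup.of 1) ^ 2 := by
  have h := mk_rel_one (show FreeGroup.of 2 * FreeGroup.of 1 * (FreeGroup.of 2)⁻¹ *
    (FreeGroup.of 1 ^ 2)⁻¹ ∈ higmanRels by simp [higmanRels])
  simp only [map_mul, map_inv, map_pow] at h
  rw [mul_inv_eq_one] at h
  exact h

lemma hrel3 : (PresentedGroup.of 3 : PresentedGroup higmanRels) * PresentedGroup.of 2 *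
    (PresentedGroup.of 3)⁻¹ = (PresentedGroup.of 2) ^ 2 := by
  have h := mk_rel_one (show FreeGroup.of 3 * FreeGroup.of 2 * (FreeGroup.of 3)⁻¹ *
    (FreeGroup.of 2 ^ 2)⁻¹ ∈ higmanRels by simp [higmanRels])
  simp only [map_mul, map_inv, map_pow] at h
  rw [mul_inv_eq_one] at h
  exact h

lemma hrel4 : (PresentedGroup.of 0 : PresentedGroup higmanRels) * PresentedGroup.of 3 *
    (PresentedGroup.of 0)⁻¹ = (PresentedGroup.of 3) ^ 2 := by
  have h := mk_rel_one (show FreeGroup.of 0 * FreeGroup.of 3 * (FreeGroup.of 0)⁻¹ *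
    (FreeGroup.of 3 ^ 2)⁻¹ ∈ higmanRels by simp [higmanRels])
  simp only [map_mul, map_inv, map_pow] at h
  rw [mul_inv_eq_one] at h
  exact h

lemma brel1 : (PresentedGroup.of 0 : PresentedGroup brieskornRels) ^ 2 =
    (PresentedGroup.of 1) ^ 3 := by
  have h := mk_rel_one (show FreeGroup.of 0 ^ 2 * (FreeGroup.of 1 ^ 3)⁻¹ ∈ brieskornRels by
    simp [brieskornRels])
  simp only [map_mul, map_inv, map_pow] at h
  rw [mul_inv_eq_one] at h
  exact h

lemma brel2 : (PresentedGroup.of 1 : PresentedGroup brieskornRels) ^ 3 =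
    (PresentedGroup.of 2) ^ 7 := by
  have h := mk_rel_one (show FreeGroup.of 1 ^ 3 * (FreeGroup.of 2 ^ 7)⁻¹ ∈ brieskornRels by
    simp [brieskornRels])
  simp only [map_mul, map_inv, map_pow] at h
  rw [mul_inv_eq_one] at h
  exact h

lemma brel3 : (PresentedGroup.of 2 : PresentedGroup brieskornRels) ^ 7 =
    PresentedGroup.of 0 * PresentedGroup.of 1 * PresentedGroup.of 2 := by
  have h := mk_rel_one (show FreeGroup.of 2 ^ 7 *
    (FreeGroup.of 0 * FreeGroup.of 1 * FreeGroup.of 2)⁻¹ ∈ brieskornRels by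
    simp [brieskornRels])
  simp only [map_mul, map_inv, map_pow] at h
  rw [mul_inv_eq_one] at h
  exact h

lemma higman_ncl :
    Subgroup.normalClosure {(PresentedGroup.of 0 : PresentedGroup higmanRels)} = ⊤ := by
  set N := Subgroup.normalClosure {(PresentedGroup.of 0 : PresentedGroup higmanRels)} with hN
  haveI : N.Normal := Subgroup.normalClosure_normal
  set π := QuotientGroup.mk' N with hπ
  have hA : π (PresentedGroup.of 0) = 1 :=
    (QuotientGroup.eq_one_iff _).mpr (Subgroup.subset_normalClosure rfl)
  have h4 := congrArg π hrel4
  simp only [map_mul, map_inv, map_pow, hA, one_mul, inv_one, mul_one] at h4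
  -- h4 : π (of 3) = π (of 3) ^ 2
  have hD : π (PresentedGroup.of 3) = 1 := sq_eq_self h4
  have h3 := congrArg π hrel3
  simp only [map_mul, map_inv, map_pow, hD, one_mul, inv_one, mul_one] at h3
  have hC : π (PresentedGroup.of 2) = 1 := sq_eq_self h3
  have h2 := congrArg π hrel2
  simp only [map_mul, map_inv, map_pow, hC, one_mul, inv_one, mul_one] at h2
  have hB : π (PresentedGroup.of 1) = 1 := sq_eq_self h2
  rw [Subgroup.eq_top_iff']
  intro x
  refine PresentedGroup.generated_by _ _ (fun j => ?_) x
  rw [← QuotientGroup.eq_one_iff]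
  fin_cases j
  · exact hA
  · exact hB
  · exact hC
  · exact hD

lemma conj_sq_eq_one {A : Type*} [CommGroup A] {a b : A} (h : b * a * b⁻¹ = a ^ 2) : a = 1 :=
  sq_eq_self (by rw [← h, mul_right_comm]; simp)

lemma higman_perfect : commutator (PresentedGroup higmanRels) = ⊤ := by
  have key : ∀ j : Fin 4, Abelianization.of (PresentedGroup.of j : PresentedGroup higmanRels) = 1 := by
    have h1 := congrArg (Abelianization.of (G := PresentedGroup higmanRels)) hrel1
    have h2 := congrArg (Abelianization.of (G := PresentedGroup higmanRels)) hrel2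
    have h3 := congrArg (Abelianization.of (G := PresentedGroup higmanRels)) hrel3
    have h4 := congrArg (Abelianization.of (G := PresentedGroup higmanRels)) hrel4
    simp only [map_mul, map_inv, map_pow] at h1 h2 h3 h4
    have hA := conj_sq_eq_one h1
    have hB := conj_sq_eq_one h2
    have hC := conj_sq_eq_one h3
    have hD := conj_sq_eq_one h4
    intro j; fin_cases j <;> assumption
  rw [Subgroup.eq_top_iff']
  intro x
  refine PresentedGroup.generated_by _ _ (fun j => ?_) x
  exact (QuotientGroup.eq_one_iff _).mp (key j)

lemma brieskorn_ncl :
    Subgroup.normalClosure {(PresentedGroup.of 0 : PresentedGroup brieskornRels)} = ⊤ := by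
  set N := Subgroup.normalClosure {(PresentedGroup.of 0 : PresentedGroup brieskornRels)} with hN
  haveI : N.Normal := Subgroup.normalClosure_normal
  set π := QuotientGroup.mk' N with hπ
  have hX : π (PresentedGroup.of 0) = 1 :=
    (QuotientGroup.eq_one_iff _).mpr (Subgroup.subset_normalClosure rfl)
  have h1 := congrArg π brel1
  have h2 := congrArg π brel2
  have h3 := congrArg π brel3
  simp only [map_mul, map_pow, hX, one_pow, one_mul] at h1 h2 h3
  -- h1 : 1 = π (of 1) ^ 3 ;  h2 : π (of 1)^3 = π (of 2)^7 ; h3 : π (of 2)^7 = π (of 1) * π (of 2)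
  set Y := π (PresentedGroup.of 1)
  set Z := π (PresentedGroup.of 2)
  have hY3 : Y ^ 3 = 1 := h1.symm
  have hZ7 : Z ^ 7 = 1 := by rw [← h2, hY3]
  have hYZ : Y * Z = 1 := by rw [← h3, hZ7]
  have hY : Y = Z⁻¹ := eq_inv_of_mul_eq_one_left hYZ
  have hZ3 : Z ^ 3 = 1 := by
    have : (Z⁻¹) ^ 3 = 1 := by rw [← hY]; exact hY3
    rw [inv_pow] at this
    rw [← inv_inv (Z ^ 3), this, inv_one]
  have hZ : Z = 1 := by
    have : Z ^ 7 = (Z ^ 3) ^ 2 * Z := by group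
    rw [hZ3, one_pow, one_mul] at this
    rw [← this, hZ7]
  have hYone : Y = 1 := by rw [hY, hZ, inv_one]
  rw [Subgroup.eq_top_iff']
  intro x
  refine PresentedGroup.generated_by _ _ (fun j => ?_) x
  rw [← QuotientGroup.eq_one_iff]
  fin_cases j
  · exact hX
  · exact hYone
  · exact hZ

lemma brieskorn_perfect : commutator (PresentedGroup brieskornRels) = ⊤ := by
  have key : ∀ j : Fin 3,
      Abelianization.of (PresentedGroup.of j : PresentedGroup brieskornRels) = 1 := by
    have h1 := congrArg (Abelianization.of (G := PresentedGroup brieskornRels)) brel1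
    have h2 := congrArg (Abelianization.of (G := PresentedGroup brieskornRels)) brel2
    have h3 := congrArg (Abelianization.of (G := PresentedGroup brieskornRels)) brel3
    simp only [map_mul, map_pow] at h1 h2 h3
    set X := Abelianization.of (PresentedGroup.of (rels := brieskornRels) 0)
    set Y := Abelianization.of (PresentedGroup.of (rels := brieskornRels) 1)
    set Z := Abelianization.of (PresentedGroup.of (rels := brieskornRels) 2)
    -- h1 : X^2 = Y^3, h2 : Y^3 = Z^7, h3 : Z^7 = X*Y*Z
    have hX : X = Y * Z := by
      have : X * X = X * (Y * Z) := by
        rw [← mul_assoc, ← pow_two, h1, h2, h3]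
      exact mul_left_cancel this
    have hY : Y = Z ^ 2 := by
      have : Y ^ 2 * Y = Y ^ 2 * Z ^ 2 := by
        rw [← pow_succ, ← h1, hX, mul_pow]
      exact mul_left_cancel this
    have hZ : Z = 1 := by
      have : Z ^ 6 * Z = Z ^ 6 * 1 := by
        rw [← pow_succ, mul_one, ← h2, hY, ← pow_mul]
      exact mul_left_cancel this
    have hYone : Y = 1 := by rw [hY, hZ, one_pow]
    have hXone : X = 1 := by rw [hX, hZ, hYone, one_mul]
    intro j; fin_cases j <;> assumption
  rw [Subgroup.eq_top_iff']
  intro x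
  refine PresentedGroup.generated_by _ _ (fun j => ?_) x
  exact (QuotientGroup.eq_one_iff _).mp (key j)

lemma commutator_single {P Q : Type*} [Group P] [Group Q] (p₁ p₂ : P) (q : Q) :
    ⁅((p₁, 1) : P × Q), (p₂, q)⁆ = (⁅p₁, p₂⁆, 1) := by
  simp only [commutatorElement_def, Prod.mk_mul_mk, Prod.inv_mk, Prod.mk.injEq]
  constructor
  · trivial
  · group

lemma commutator_inr {P Q : Type*} [Group P] [Group Q] (q₁ : Q) (p : P) (q₂ : Q) :
    ⁅((1, q₁) : P × Q), (p, q₂)⁆ = (1, ⁅q₁, q₂⁆) := by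
  simp only [commutatorElement_def, Prod.mk_mul_mk, Prod.inv_mk, Prod.mk.injEq]
  constructor
  · group
  · trivial

lemma commutator_mulSingle {η : Type*} [DecidableEq η] {f : η → Type*} [∀ i, Group (f i)]
    (i : η) (h : f i) (v : ∀ j, f j) :
    ⁅Pi.mulSingle i h, v⁆ = Pi.mulSingle i ⁅h, v i⁆ := by
  funext j
  by_cases hj : j = i
  · subst hj
    simp [commutatorElement_def]
  · simp [commutatorElement_def, Pi.mulSingle_apply, hj]

/-- For `k, l ≥ 0`, the group `H^k × B^l × ℤ` (with `H` the Higman group and `B`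
the Brieskorn `Σ(2,3,7)` group) is the normal closure of the single element whose `H`-coordinates
all equal (the image of) `a`, whose `B`-coordinates all equal (the image of) `x`, and whose
`ℤ`-coordinate is `1`; in particular it has weight `1`. -/
theorem stmt_8 (k l : ℕ) :
    Subgroup.normalClosure
      ({((fun _ => PresentedGroup.of (0 : Fin 4)),
         (fun _ => PresentedGroup.of (0 : Fin 3)),
         Multiplicative.ofAdd (1 : ℤ))} :
        Set ((Fin k → PresentedGroup higmanRels) × (Fin l → PresentedGroup brieskornRels) ×
          Multiplicative ℤ)) = ⊤ := by
  classical
  set a : PresentedGroup higmanRels := PresentedGroup.of (0 : Fin 4) with ha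
  set x : PresentedGroup brieskornRels := PresentedGroup.of (0 : Fin 3) with hx
  set g : (Fin k → PresentedGroup higmanRels) × (Fin l → PresentedGroup brieskornRels) ×
      Multiplicative ℤ :=
    ((fun _ => a), (fun _ => x), Multiplicative.ofAdd (1 : ℤ)) with hg
  set N := Subgroup.normalClosure {g} with hN
  haveI hNn : N.Normal := Subgroup.normalClosure_normal
  have hgN : g ∈ N := Subgroup.subset_normalClosure rfl
  have hcommN : ∀ u : (Fin k → PresentedGroup higmanRels) ×
      (Fin l → PresentedGroup brieskornRels) × Multiplicative ℤ, ⁅u, g⁆ ∈ N := by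
    intro u
    have h1 : u * g * u⁻¹ ∈ N := hNn.conj_mem g hgN u
    simpa [commutatorElement_def, mul_assoc] using mul_mem h1 (inv_mem hgN)
  -- embeddings
  let ψH : (Fin k → PresentedGroup higmanRels) →*
      (Fin k → PresentedGroup higmanRels) × (Fin l → PresentedGroup brieskornRels) ×
        Multiplicative ℤ := MonoidHom.inl _ _
  let ψB : (Fin l → PresentedGroup brieskornRels) →*
      (Fin k → PresentedGroup higmanRels) × (Fin l → PresentedGroup brieskornRels) ×
        Multiplicative ℤ :=
    (MonoidHom.inr _ _).comp (MonoidHom.inl _ _)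
  -- H coordinates
  have hHin : ∀ (i : Fin k) (h : PresentedGroup higmanRels),
      ψH (Pi.mulSingle i h) ∈ N := by
    intro i
    let φ : PresentedGroup higmanRels →*
        (Fin k → PresentedGroup higmanRels) × (Fin l → PresentedGroup brieskornRels) ×
          Multiplicative ℤ :=
      ψH.comp (MonoidHom.mulSingle (fun _ : Fin k => PresentedGroup higmanRels) i)
    have hcom : ∀ h : PresentedGroup higmanRels, φ ⁅h, a⁆ ∈ N := by
      intro h
      have e : φ ⁅h, a⁆ = ⁅φ h, g⁆ := by
        have h1 : φ ⁅h, a⁆ = (Pi.mulSingle i ⁅h, a⁆, 1) := rfl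
        have h2 : φ h = (Pi.mulSingle i h, 1) := rfl
        rw [h1, h2, hg, commutator_single, commutator_mulSingle]
      rw [e]
      exact hcommN _
    exact key_lemma higman_perfect higman_ncl φ N hcom
  have hHall : ∀ u : Fin k → PresentedGroup higmanRels, ψH u ∈ N := by
    intro u
    have : u ∈ N.comap ψH :=
      Subgroup.pi_mem_of_mulSingle_mem u fun i => by
        show ψH (Pi.mulSingle i (u i)) ∈ N
        exact hHin i (u i)
    exact this
  -- B coordinates
  have hBin : ∀ (i : Fin l) (b : PresentedGroup brieskornRels),
      ψB (Pi.mulSingle i b) ∈ N := by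
    intro i
    let φ : PresentedGroup brieskornRels →*
        (Fin k → PresentedGroup higmanRels) × (Fin l → PresentedGroup brieskornRels) ×
          Multiplicative ℤ :=
      ψB.comp (MonoidHom.mulSingle (fun _ : Fin l => PresentedGroup brieskornRels) i)
    have hcom : ∀ b : PresentedGroup brieskornRels, φ ⁅b, x⁆ ∈ N := by
      intro b
      have e : φ ⁅b, x⁆ = ⁅φ b, g⁆ := by
        have h1 : φ ⁅b, x⁆ = (1, (Pi.mulSingle i ⁅b, x⁆, 1)) := rfl
        have h2 : φ b = (1, (Pi.mulSingle i b, 1)) := rfl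
        rw [h1, h2, hg, commutator_inr, commutator_single, commutator_mulSingle]
      rw [e]
      exact hcommN _
    exact key_lemma brieskorn_perfect brieskorn_ncl φ N hcom
  have hBall : ∀ u : Fin l → PresentedGroup brieskornRels, ψB u ∈ N := by
    intro u
    have : u ∈ N.comap ψB :=
      Subgroup.pi_mem_of_mulSingle_mem u fun i => by
        show ψB (Pi.mulSingle i (u i)) ∈ N
        exact hBin i (u i)
    exact this
  -- the ℤ coordinate
  have hz1 : ((1, (1, Multiplicative.ofAdd (1 : ℤ))) :
      (Fin k → PresentedGroup higmanRels) × (Fin l → PresentedGroup brieskornRels) ×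
        Multiplicative ℤ) ∈ N := by
    have he : ((1, (1, Multiplicative.ofAdd (1 : ℤ))) :
        (Fin k → PresentedGroup higmanRels) × (Fin l → PresentedGroup brieskornRels) ×
          Multiplicative ℤ) = g * (ψH (fun _ => a))⁻¹ * (ψB (fun _ => x))⁻¹ := by
      rw [hg]
      show _ = ((fun _ => a), (fun _ => x), Multiplicative.ofAdd (1 : ℤ)) *
        ((fun _ => a), 1, 1)⁻¹ * (1, (fun _ => x), 1)⁻¹
      simp [Prod.ext_iff]
    rw [he]
    exact mul_mem (mul_mem hgN (inv_mem (hHall _))) (inv_mem (hBall _))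
  have hzall : ∀ t : Multiplicative ℤ, ((1, (1, t)) :
      (Fin k → PresentedGroup higmanRels) × (Fin l → PresentedGroup brieskornRels) ×
        Multiplicative ℤ) ∈ N := by
    intro t
    have he : ((1, (1, t)) :
        (Fin k → PresentedGroup higmanRels) × (Fin l → PresentedGroup brieskornRels) ×
          Multiplicative ℤ) =
        ((1, (1, Multiplicative.ofAdd (1 : ℤ))) :
          (Fin k → PresentedGroup higmanRels) × (Fin l → PresentedGroup brieskornRels) ×
            Multiplicative ℤ) ^ (Multiplicative.toAdd t) := by
      simp [Prod.ext_iff, ← ofAdd_zsmul]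
    rw [he]
    exact zpow_mem hz1 _
  rw [Subgroup.eq_top_iff']
  intro w
  have hw : w = ψH w.1 * ψB w.2.1 * (1, (1, w.2.2)) := by
    show w = (w.1, 1, 1) * (1, w.2.1, 1) * (1, 1, w.2.2)
    simp [Prod.ext_iff]
  rw [hw]
  exact mul_mem (mul_mem (hHall _) (hBall _)) (hzall _)
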